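/- (Corners of regular boundaries.) Let n ≥ d ≥ 1, set k = n + d, and let C be a regular color map on T_k. Then every edge of T_k with both endpoints in one of the three corner sub-triangles of side d of T_k (the sub-triangle of side d containing one of the three extremal vertices (0,0), (k,0), (0,k)) has color 1. -/

import Mathlib

noncomputable section

/-- The four possible colors of a puzzle edge: `0`, `1`, `3` and `m`. -/
inductive PColor
  | c0 | c1 | c3 | cm
deriving DecidableEq

/-- The step of an edge of type `ℓ`: type `0` goes to `x+(−1,0)`, type `1` to `x+(1,−1)`,
type `2` to `x+(0,1)`. -/
def edgeStep : Fin 3 → ℤ × ℤ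
  | 0 => (-1, 0)
  | 1 => (1, -1)
  | 2 => (0, 1)

/-- A triple of colors, read clockwise around a triangular face, is admissible if it is a
cyclic rotation of `(0,0,0)`, `(1,1,1)`, `(1,0,3)` or `(0,1,m)`. -/
def okTriple (a b c : PColor) : Prop :=
  (a = .c0 ∧ b = .c0 ∧ c = .c0) ∨ (a = .c1 ∧ b = .c1 ∧ c = .c1) ∨
  (a = .c1 ∧ b = .c0 ∧ c = .c3) ∨ (a = .c0 ∧ b = .c3 ∧ c = .c1) ∨
  (a = .c3 ∧ b = .c1 ∧ c = .c0) ∨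
  (a = .c0 ∧ b = .c1 ∧ c = .cm) ∨ (a = .c1 ∧ b = .cm ∧ c = .c0) ∨
  (a = .cm ∧ b = .c0 ∧ c = .c1)

/-- A color map on the triangular grid `T_k`. -/
def IsColorMap (k : ℕ) (C : Fin 3 → ℤ × ℤ → PColor) : Prop :=
  (∀ x : ℤ × ℤ, 0 ≤ x.1 → 0 ≤ x.2 → x.1 + x.2 + 1 ≤ (k : ℤ) →
    okTriple (C 2 x) (C 1 (x + (0, 1))) (C 0 (x + (1, 0)))) ∧
  (∀ x : ℤ × ℤ, 0 ≤ x.1 → 1 ≤ x.2 → x.1 + x.2 + 1 ≤ (k : ℤ) →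
    okTriple (C 0 (x + (1, 0))) (C 2 (x + (1, -1))) (C 1 x))

/-- The boundary color at height `h` on a side of `T_{n+d}` for a regular color map:
`1` for `0 ≤ h < d`, `0` for `d ≤ h < n`, `1` for `n ≤ h < n+d`. -/
def bCol (n d : ℕ) (h : ℤ) : PColor :=
  if h < (d : ℤ) then .c1 else if h < (n : ℤ) then .c0 else .c1

/-- A regular color map on `T_{n+d}`: a color map whose boundary edges, ordered by
increasing height on each of the three sides, have colors `1^d 0^{n-d} 1^d`. -/
def IsRegularColorMap (n d : ℕ) (C : Fin 3 → ℤ × ℤ → PColor) : Prop :=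
  IsColorMap (n + d) C ∧
  (∀ h : ℤ, 0 ≤ h → h ≤ (n : ℤ) + d - 1 → C 0 ((n : ℤ) + d - h, 0) = bCol n d h) ∧
  (∀ h : ℤ, 0 ≤ h → h ≤ (n : ℤ) + d - 1 → C 1 (h, (n : ℤ) + d - h) = bCol n d h) ∧
  (∀ h : ℤ, 0 ≤ h → h ≤ (n : ℤ) + d - 1 → C 2 (0, h) = bCol n d h)

/-- Membership in the equilateral sub-triangle with corner `(r₀, s₀)` and side `t`. -/
def inTri (r0 s0 : ℤ) (t : ℕ) (v : ℤ × ℤ) : Prop :=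
  r0 ≤ v.1 ∧ s0 ≤ v.2 ∧ v.1 + v.2 ≤ r0 + s0 + t

instance : Fintype PColor where
  elems := {.c0, .c1, .c3, .cm}
  complete := fun x => by cases x <;> decide

instance (a b c : PColor) : Decidable (okTriple a b c) := by
  unfold okTriple; infer_instance

lemma ok_cyc : ∀ a b c : PColor, okTriple a b c → okTriple b c a := by decide

lemma ok_up : ∀ a1 b c a0 : PColor, okTriple a1 b .c1 → okTriple b c a0 →
    (a0 = .c1 ∨ a0 = .cm) → (a1 = .c1 ∨ a1 = .cm) := by decide

lemma ok_top : ∀ c a : PColor, okTriple .c1 c a → (a = .c1 ∨ a = .cm) → a = .c1 := by decide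

lemma ok_down : ∀ b c a0 : PColor, okTriple .c1 b .c1 → okTriple b c a0 →
    (a0 = .c1 ∨ a0 = .cm) → b = .c1 ∧ c = .c1 ∧ a0 = .c1 := by decide

lemma ok_mid : ∀ c : PColor, okTriple .c1 c .c1 → c = .c1 := by decide

lemma cornerOrigin (n d : ℕ) (hd : 1 ≤ d) (hdn : d ≤ n)
    (C : Fin 3 → ℤ × ℤ → PColor) (hC : IsRegularColorMap n d C) :
    ∀ t : ℕ, t ≤ d →
      (∀ r s : ℤ, 1 ≤ r → 0 ≤ s → r + s ≤ (t : ℤ) → C 0 (r, s) = .c1) ∧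
      (∀ r s : ℤ, 0 ≤ r → 1 ≤ s → r + s ≤ (t : ℤ) → C 1 (r, s) = .c1) ∧
      (∀ r s : ℤ, 0 ≤ r → 0 ≤ s → r + s + 1 ≤ (t : ℤ) → C 2 (r, s) = .c1) := by
  obtain ⟨⟨hdir, hrev⟩, hb0, _hb1, hb2⟩ := hC
  have hdn' : (d : ℤ) ≤ (n : ℤ) := by exact_mod_cast hdn
  have hd' : (1 : ℤ) ≤ (d : ℤ) := by exact_mod_cast hd
  intro t
  induction t with
  | zero =>
    intro _
    refine ⟨fun r s h1 h2 h3 => absurd h3 (by omega),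
            fun r s h1 h2 h3 => absurd h3 (by omega),
            fun r s h1 h2 h3 => absurd h3 (by omega)⟩
  | succ t IH =>
    intro hT
    have hT' : ((t : ℤ) + 1) ≤ (d : ℤ) := by exact_mod_cast hT
    obtain ⟨IH0, IH1, IH2⟩ := IH (by omega)
    -- layer functions
    set A : ℕ → PColor := fun s => C 0 ((t : ℤ) - s + 1, (s : ℤ)) with hA
    set B : ℕ → PColor := fun s => C 2 ((t : ℤ) - s + 1, (s : ℤ) - 1) with hB
    set Cc : ℕ → PColor := fun s => C 1 ((t : ℤ) - s + 1, (s : ℤ)) with hCc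
    -- boundary facts
    have ha0 : A 0 = .c1 := by
      have h := hb0 ((n : ℤ) + d - ((t : ℤ) + 1)) (by omega) (by omega)
      have e : (n : ℤ) + d - ((n : ℤ) + d - ((t : ℤ) + 1)) = (t : ℤ) + 1 := by ring
      rw [e] at h
      rw [bCol, if_neg (by omega), if_neg (by omega)] at h
      show C 0 ((t : ℤ) - (0:ℕ) + 1, ((0:ℕ) : ℤ)) = .c1
      convert h using 2
      all_goals simp only [Prod.mk.injEq]
      all_goals push_cast
      all_goals (simp only [and_true]; omega)
    have hbT : B (t + 1) = .c1 := by
      have h := hb2 (t : ℤ) (by omega) (by omega)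
      rw [bCol, if_pos (by omega)] at h
      show C 2 ((t : ℤ) - (↑(t + 1) : ℤ) + 1, (↑(t + 1) : ℤ) - 1) = .c1
      convert h using 2
      all_goals simp only [Prod.mk.injEq]
      all_goals push_cast
      all_goals omega
    -- face facts
    have hface1 : ∀ s : ℕ, 1 ≤ s → s ≤ t → okTriple (A s) (B s) .c1 := by
      intro s h1 h2
      have hx := hrev ((t : ℤ) - s, (s : ℤ)) (by push_cast; omega) (by push_cast; omega)
        (by push_cast; omega)
      have hc1 : C 1 ((t : ℤ) - s, (s : ℤ)) = .c1 := IH1 _ _ (by push_cast; omega)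
        (by push_cast; omega) (by push_cast; omega)
      simp only [Prod.mk_add_mk] at hx
      rw [hc1] at hx
      convert hx using 3 <;> push_cast <;> ring
    have hface2 : ∀ s : ℕ, s ≤ t → okTriple (B (s + 1)) (Cc (s + 1)) (A s) := by
      intro s h2
      have hx := hdir ((t : ℤ) - s, (s : ℤ)) (by push_cast; omega) (by push_cast; omega)
        (by push_cast; omega)
      simp only [Prod.mk_add_mk] at hx
      convert hx using 3 <;> push_cast <;> ring
    -- upward pass
    have hup : ∀ s : ℕ, s ≤ t → (A s = .c1 ∨ A s = .cm) := by
      intro s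
      induction s with
      | zero => intro _; exact Or.inl ha0
      | succ s ihs =>
        intro hs
        exact ok_up _ _ _ _ (hface1 (s + 1) (by omega) hs) (hface2 s (by omega))
          (ihs (by omega))
    -- top
    have hatop : A t = .c1 := by
      have h2 := hface2 t le_rfl
      rw [hbT] at h2
      exact ok_top _ _ h2 (hup t le_rfl)
    -- downward pass
    have hdownall : ∀ j : ℕ, j ≤ t → A (t - j) = .c1 := by
      intro j
      induction j with
      | zero => intro _; simpa using hatop
      | succ j ihj =>
        intro hj
        have hs : 1 ≤ t - j := by omega
        have haj : A (t - j) = .c1 := ihj (by omega)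
        have h1 := hface1 (t - j) hs (by omega)
        rw [haj] at h1
        have h2 := hface2 (t - j - 1) (by omega)
        have e : t - j - 1 + 1 = t - j := by omega
        rw [e] at h2
        have := (ok_down _ _ _ h1 h2 (hup (t - j - 1) (by omega))).2.2
        have e2 : t - (j + 1) = t - j - 1 := by omega
        rw [e2]; exact this
    have haAll : ∀ s : ℕ, s ≤ t → A s = .c1 := by
      intro s hs
      have := hdownall (t - s) (by omega)
      have e : t - (t - s) = s := by omega
      rwa [e] at this
    have hbcAll : ∀ s : ℕ, 1 ≤ s → s ≤ t → B s = .c1 ∧ Cc s = .c1 := by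
      intro s h1 h2
      have hf1 := hface1 s h1 h2
      rw [haAll s h2] at hf1
      have hf2 := hface2 (s - 1) (by omega)
      have e : s - 1 + 1 = s := by omega
      rw [e] at hf2
      exact ⟨(ok_down _ _ _ hf1 hf2 (hup (s - 1) (by omega))).1,
             (ok_down _ _ _ hf1 hf2 (hup (s - 1) (by omega))).2.1⟩
    have hcT : Cc (t + 1) = .c1 := by
      have h2 := hface2 t le_rfl
      rw [hbT, hatop] at h2
      exact ok_mid _ h2
    -- assemble
    refine ⟨?_, ?_, ?_⟩
    · intro r s h1 h2 h3
      rcases lt_or_ge (r + s) ((t : ℤ) + 1) with hlt | hge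
      · exact IH0 r s h1 h2 (by omega)
      · obtain ⟨sn, rfl⟩ := Int.eq_ofNat_of_zero_le h2
        obtain rfl : r = (t : ℤ) - sn + 1 := by push_cast at h3; omega
        exact haAll sn (by push_cast at h3 hge; omega)
    · intro r s h1 h2 h3
      rcases lt_or_ge (r + s) ((t : ℤ) + 1) with hlt | hge
      · exact IH1 r s h1 h2 (by omega)
      · obtain ⟨sn, rfl⟩ := Int.eq_ofNat_of_zero_le (by omega : (0:ℤ) ≤ s)
        obtain rfl : r = (t : ℤ) - sn + 1 := by push_cast at h3; omega
        rcases Nat.lt_or_ge sn (t + 1) with hlt2 | hge2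
        · exact (hbcAll sn (by push_cast at h2; omega) (by omega)).2
        · obtain rfl : sn = t + 1 := by push_cast at h3 hge; omega
          exact hcT
    · intro r s h1 h2 h3
      rcases lt_or_ge (r + s + 1) ((t : ℤ) + 1) with hlt | hge
      · exact IH2 r s h1 h2 (by omega)
      · obtain ⟨sn, rfl⟩ := Int.eq_ofNat_of_zero_le h2
        obtain rfl : r = (t : ℤ) - (sn + 1 : ℕ) + 1 := by push_cast at h3; push_cast; omega
        have hd2 : ((sn + 1 : ℕ) : ℤ) - 1 = (sn : ℤ) := by push_cast; ring
        have he : B (sn + 1) = C 2 ((t : ℤ) - ((sn+1:ℕ):ℤ) + 1, (sn : ℤ)) := by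
          show C 2 ((t : ℤ) - ((sn+1:ℕ):ℤ) + 1, ((sn+1:ℕ):ℤ) - 1) = _
          rw [hd2]
        rw [← he]
        rcases Nat.lt_or_ge sn t with hlt2 | hge2
        · exact (hbcAll (sn + 1) (by omega) (by omega)).1
        · obtain rfl : sn = t := by push_cast at h3 hge; omega
          exact hbT

def rotC (k : ℕ) (C : Fin 3 → ℤ × ℤ → PColor) : Fin 3 → ℤ × ℤ → PColor
  | 0, y => C 2 (y.2, (k : ℤ) - y.1 - y.2)
  | 1, y => C 0 (y.2, (k : ℤ) - y.1 - y.2)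
  | 2, y => C 1 (y.2, (k : ℤ) - y.1 - y.2)

lemma rotC_zero (k : ℕ) (C : Fin 3 → ℤ × ℤ → PColor) (y : ℤ × ℤ) :
    rotC k C 0 y = C 2 (y.2, (k : ℤ) - y.1 - y.2) := rfl
lemma rotC_one (k : ℕ) (C : Fin 3 → ℤ × ℤ → PColor) (y : ℤ × ℤ) :
    rotC k C 1 y = C 0 (y.2, (k : ℤ) - y.1 - y.2) := rfl
lemma rotC_two (k : ℕ) (C : Fin 3 → ℤ × ℤ → PColor) (y : ℤ × ℤ) :
    rotC k C 2 y = C 1 (y.2, (k : ℤ) - y.1 - y.2) := rfl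

lemma rot_regular (n d : ℕ) (C : Fin 3 → ℤ × ℤ → PColor)
    (hC : IsRegularColorMap n d C) : IsRegularColorMap n d (rotC (n + d) C) := by
  obtain ⟨⟨hdir, hrev⟩, hb0, hb1, hb2⟩ := hC
  refine ⟨⟨?_, ?_⟩, ?_, ?_, ?_⟩
  · intro x hx1 hx2 hx3
    rw [rotC_zero, rotC_one, rotC_two]
    have h := ok_cyc _ _ _ (hdir (x.2, ((n:ℤ)+d) - x.1 - x.2 - 1)
      (by simpa using hx2) (by simp; push_cast at hx3 ⊢; omega)
      (by simp; push_cast at hx3 ⊢; omega))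
    simp only [Prod.mk_add_mk] at h
    convert h using 2 <;> (try simp [Prod.ext_iff]) <;> (try push_cast) <;> omega
  · intro x hx1 hx2 hx3
    rw [rotC_zero, rotC_one, rotC_two]
    have h := ok_cyc _ _ _ (hrev (x.2 - 1, ((n:ℤ)+d) - x.1 - x.2)
      (by simp; omega) (by simp; push_cast at hx3 ⊢; omega)
      (by simp; push_cast at hx3 ⊢; omega))
    simp only [Prod.mk_add_mk] at h
    convert h using 2 <;> (try simp [Prod.ext_iff]) <;> (try push_cast) <;> omega
  · intro h h1 h2
    rw [rotC_zero]
    have := hb2 h h1 h2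
    convert this using 2 <;> (try simp [Prod.ext_iff]) <;> (try push_cast) <;> omega
  · intro h h1 h2
    rw [rotC_one]
    have := hb0 h h1 h2
    convert this using 2 <;> (try simp [Prod.ext_iff]) <;> (try push_cast) <;> omega
  · intro h h1 h2
    rw [rotC_two]
    have := hb1 h h1 h2
    convert this using 2 <;> (try simp [Prod.ext_iff]) <;> (try push_cast) <;> omega

lemma cornerOriginEdges (n d : ℕ) (hd : 1 ≤ d) (hdn : d ≤ n)
    (C : Fin 3 → ℤ × ℤ → PColor) (hC : IsRegularColorMap n d C) :
    ∀ ℓ : Fin 3, ∀ y : ℤ × ℤ, inTri 0 0 d y → inTri 0 0 d (y + edgeStep ℓ) →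
      C ℓ y = .c1 := by
  obtain ⟨h0, h1, h2⟩ := cornerOrigin n d hd hdn C hC d le_rfl
  intro ℓ y hy hy'
  simp only [inTri] at hy hy'
  obtain ⟨a1, a2, a3⟩ := hy
  obtain ⟨b1, b2, b3⟩ := hy'
  fin_cases ℓ
  · simp only [edgeStep, Prod.fst_add, Prod.snd_add] at b1 b2 b3
    exact h0 y.1 y.2 (by omega) (by omega) (by omega)
  · simp only [edgeStep, Prod.fst_add, Prod.snd_add] at b1 b2 b3
    exact h1 y.1 y.2 (by omega) (by omega) (by omega)
  · simp only [edgeStep, Prod.fst_add, Prod.snd_add] at b1 b2 b3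
    exact h2 y.1 y.2 (by omega) (by omega) (by omega)

/-- **Corners of regular boundaries.**
For a regular color map on `T_{n+d}`, every edge with both endpoints in one of the three
corner sub-triangles of side `d` has color `1`. -/
theorem statement14 (n d : ℕ) (hd : 1 ≤ d) (hdn : d ≤ n)
    (C : Fin 3 → ℤ × ℤ → PColor) (hC : IsRegularColorMap n d C) :
    ∀ ℓ : Fin 3, ∀ y : ℤ × ℤ,
      ((inTri 0 0 d y ∧ inTri 0 0 d (y + edgeStep ℓ)) ∨
       (inTri (n : ℤ) 0 d y ∧ inTri (n : ℤ) 0 d (y + edgeStep ℓ)) ∨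
       (inTri 0 (n : ℤ) d y ∧ inTri 0 (n : ℤ) d (y + edgeStep ℓ))) →
      C ℓ y = .c1 := by
  have key0 := cornerOriginEdges n d hd hdn C hC
  have hreg1 := rot_regular n d C hC
  have hreg2 := rot_regular n d _ hreg1
  have key1 := cornerOriginEdges n d hd hdn _ hreg1
  have key2 := cornerOriginEdges n d hd hdn _ hreg2
  intro ℓ y h
  rcases h with ⟨hy, hy'⟩ | ⟨hy, hy'⟩ | ⟨hy, hy'⟩
  · exact key0 ℓ y hy hy'
  · -- corner (n, 0) : double rotation, y' = (y.2, k - y.1 - y.2), ℓ' = ℓ + 2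
    simp only [inTri] at hy hy'
    obtain ⟨a1, a2, a3⟩ := hy
    obtain ⟨b1, b2, b3⟩ := hy'
    fin_cases ℓ
    · simp only [edgeStep, Prod.fst_add, Prod.snd_add] at b1 b2 b3
      have hres := key2 2 (y.2, ((n:ℤ)+d) - y.1 - y.2)
        (by refine ⟨by simp; omega, by simp; omega, by simp; push_cast; omega⟩)
        (by
          refine ⟨?_, ?_, ?_⟩ <;>
            simp only [edgeStep, Prod.mk_add_mk, Prod.fst_add, Prod.snd_add] <;>
            push_cast <;> omega)
      rw [rotC_two, rotC_one] at hres
      convert hres using 2 <;> (try simp [Prod.ext_iff]) <;> (try push_cast) <;> omega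
    · simp only [edgeStep, Prod.fst_add, Prod.snd_add] at b1 b2 b3
      have hres := key2 0 (y.2, ((n:ℤ)+d) - y.1 - y.2)
        (by refine ⟨by simp; omega, by simp; omega, by simp; push_cast; omega⟩)
        (by
          refine ⟨?_, ?_, ?_⟩ <;>
            simp only [edgeStep, Prod.mk_add_mk, Prod.fst_add, Prod.snd_add] <;>
            push_cast <;> omega)
      rw [rotC_zero, rotC_two] at hres
      convert hres using 2 <;> (try simp [Prod.ext_iff]) <;> (try push_cast) <;> omega
    · simp only [edgeStep, Prod.fst_add, Prod.snd_add] at b1 b2 b3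
      have hres := key2 1 (y.2, ((n:ℤ)+d) - y.1 - y.2)
        (by refine ⟨by simp; omega, by simp; omega, by simp; push_cast; omega⟩)
        (by
          refine ⟨?_, ?_, ?_⟩ <;>
            simp only [edgeStep, Prod.mk_add_mk, Prod.fst_add, Prod.snd_add] <;>
            push_cast <;> omega)
      rw [rotC_one, rotC_zero] at hres
      convert hres using 2 <;> (try simp [Prod.ext_iff]) <;> (try push_cast) <;> omega
  · -- corner (0, n) : single rotation, y' = (k - y.1 - y.2, y.1), ℓ' = ℓ + 1
    simp only [inTri] at hy hy'
    obtain ⟨a1, a2, a3⟩ := hy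
    obtain ⟨b1, b2, b3⟩ := hy'
    fin_cases ℓ
    · simp only [edgeStep, Prod.fst_add, Prod.snd_add] at b1 b2 b3
      have hres := key1 1 (((n:ℤ)+d) - y.1 - y.2, y.1)
        (by refine ⟨by simp; push_cast; omega, by simp; omega, by simp; push_cast; omega⟩)
        (by
          refine ⟨?_, ?_, ?_⟩ <;>
            simp only [edgeStep, Prod.mk_add_mk, Prod.fst_add, Prod.snd_add] <;>
            push_cast <;> omega)
      rw [rotC_one] at hres
      convert hres using 2 <;> (try simp [Prod.ext_iff]) <;> (try push_cast) <;> omega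
    · simp only [edgeStep, Prod.fst_add, Prod.snd_add] at b1 b2 b3
      have hres := key1 2 (((n:ℤ)+d) - y.1 - y.2, y.1)
        (by refine ⟨by simp; push_cast; omega, by simp; omega, by simp; push_cast; omega⟩)
        (by
          refine ⟨?_, ?_, ?_⟩ <;>
            simp only [edgeStep, Prod.mk_add_mk, Prod.fst_add, Prod.snd_add] <;>
            push_cast <;> omega)
      rw [rotC_two] at hres
      convert hres using 2 <;> (try simp [Prod.ext_iff]) <;> (try push_cast) <;> omega
    · simp only [edgeStep, Prod.fst_add, Prod.snd_add] at b1 b2 b3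
      have hres := key1 0 (((n:ℤ)+d) - y.1 - y.2, y.1)
        (by refine ⟨by simp; push_cast; omega, by simp; omega, by simp; push_cast; omega⟩)
        (by
          refine ⟨?_, ?_, ?_⟩ <;>
            simp only [edgeStep, Prod.mk_add_mk, Prod.fst_add, Prod.snd_add] <;>
            push_cast <;> omega)
      rw [rotC_zero] at hres
      convert hres using 2 <;> (try simp [Prod.ext_iff]) <;> (try push_cast) <;> omega
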